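/- Let R be a commutative ring with 0 ≠ 1 and let A be a rook matrix of size l × k over R. Then there exist a permutation matrix S of size l × l and a rook matrix P of size l × k in pseudo-echelon form such that A = S * P, and moreover P has exactly the same zero rows and exactly the same zero columns as A (for every i, row i of P is zero iff row i of A is zero, and for every j, column j of P is zero iff column j of A is zero). -/
import Mathlib


/-- A rook matrix: every entry is 0 or 1, and there is at most one entry
equal to 1 in each row and in each column. -/
def IsRookMatrix {l k : ℕ} {R : Type*} [CommRing R]
    (A : Matrix (Fin l) (Fin k) R) : Prop :=
  (∀ i j, A i j = 0 ∨ A i j = 1) ∧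
  (∀ i j j', A i j = 1 → A i j' = 1 → j = j') ∧
  (∀ i i' j, A i j = 1 → A i' j = 1 → i = i')

/-- Pseudo-echelon form: if rows `i < i'` contain nonzero entries in columns
`j` and `j'` respectively, then `j < j'`. -/
def IsPseudoEchelon {l k : ℕ} {R : Type*} [CommRing R]
    (A : Matrix (Fin l) (Fin k) R) : Prop :=
  ∀ i i' j j', i < i' → A i j ≠ 0 → A i' j' ≠ 0 → j < j'

/-- A permutation matrix: the 0–1 matrix of some permutation `σ`, with
entry 1 exactly in the positions `(σ j, j)`. -/
def IsPermMatrix {n : ℕ} {R : Type*} [CommRing R]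
    (S : Matrix (Fin n) (Fin n) R) : Prop :=
  ∃ σ : Equiv.Perm (Fin n), ∀ i j, S i j = if i = σ j then 1 else 0

/-- The matrix `[f]` associated to a partial equivalence (rook diagram)
`f : PEquiv (Fin k) (Fin l)`: the `(q, p)` entry is 1 if `f p = q` and 0
otherwise. -/
def rookMatrixOf {k l : ℕ} (R : Type*) [CommRing R]
    (f : PEquiv (Fin k) (Fin l)) : Matrix (Fin l) (Fin k) R :=
  fun q p => if f p = some q then 1 else 0

/-- A partial equivalence (rook diagram) is monotone (planar) if for all
`p, q` in its domain, `p < q` implies `f p < f q`. -/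
def IsMonotonePE {k l : ℕ} (f : PEquiv (Fin k) (Fin l)) : Prop :=
  ∀ p q i j, i ∈ f p → j ∈ f q → p < q → i < j

theorem rookMatrix_eq_perm_mul_pseudoEchelon {l k : ℕ} {R : Type*} [CommRing R]
    [Nontrivial R] (A : Matrix (Fin l) (Fin k) R) (hA : IsRookMatrix A) :
    ∃ (S : Matrix (Fin l) (Fin l) R) (P : Matrix (Fin l) (Fin k) R),
      IsPermMatrix S ∧ IsRookMatrix P ∧ IsPseudoEchelon P ∧ A = S * P ∧
      (∀ i, (∀ j, P i j = 0) ↔ (∀ j, A i j = 0)) ∧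
      (∀ j, (∀ i, P i j = 0) ↔ (∀ i, A i j = 0)) := by
  classical
  obtain ⟨h01, hrow, hcol⟩ := hA
  rcases Nat.eq_zero_or_pos k with hk | hk
  · refine ⟨1, A, ⟨Equiv.refl _, fun i j => Matrix.one_apply⟩, ⟨h01, hrow, hcol⟩, ?_,
      (Matrix.one_mul A).symm, fun i => Iff.rfl, fun j => Iff.rfl⟩
    intro i i' j j' _ _ _
    exact absurd j.isLt (by omega)
  · set p : Fin l → Prop := fun i => ∃ j, A i j = 1 with hp
    set N : Finset (Fin l) := Finset.univ.filter p with hN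
    have hmemN : ∀ i, i ∈ N ↔ p i := by intro i; simp [hN]
    set c : Fin l → Fin k := fun i => if h : p i then h.choose else ⟨0, hk⟩ with hcdef
    have hc1 : ∀ i, p i → A i (c i) = 1 := by
      intro i h
      simp only [hcdef, dif_pos h]
      exact h.choose_spec
    have hcu : ∀ i j, A i j = 1 → c i = j := fun i j h => hrow i _ _ (hc1 i ⟨j, h⟩) h
    have hcinjN : Set.InjOn c ↑N := by
      intro i hi i' hi' he
      exact hcol i i' (c i) (hc1 i ((hmemN i).1 hi)) (he ▸ hc1 i' ((hmemN i').1 hi'))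
    set T : Finset (Fin k) := N.image c with hT
    have hcard : T.card = N.card := Finset.card_image_of_injOn hcinjN
    let e1 : Fin N.card ≃o {x // x ∈ N} := N.orderIsoOfFin rfl
    let e2 : Fin N.card ≃o {x // x ∈ T} := T.orderIsoOfFin hcard
    have hbij : Function.Bijective
        (fun x : {x // x ∈ N} => (⟨c x, Finset.mem_image_of_mem c x.2⟩ : {y // y ∈ T})) := by
      rw [Fintype.bijective_iff_injective_and_card]
      constructor
      · intro x x' h
        exact Subtype.ext (hcinjN x.2 x'.2 (congrArg Subtype.val h))
      · simp [Fintype.card_coe, hcard]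
    let cE : {x // x ∈ N} ≃ {y // y ∈ T} := Equiv.ofBijective _ hbij
    let σN : Equiv.Perm {x // x ∈ N} :=
      (e1.symm.toEquiv).trans ((e2.toEquiv).trans cE.symm)
    have hcσN : ∀ x : {x // x ∈ N}, c ((σN x : {x // x ∈ N}) : Fin l)
        = ((e2 (e1.symm x) : {y // y ∈ T}) : Fin k) := by
      intro x
      have := cE.apply_symm_apply (e2 (e1.symm x))
      exact congrArg Subtype.val this
    let σ : Equiv.Perm (Fin l) := Equiv.Perm.subtypeCongr σN (Equiv.refl _)
    have hσN : ∀ i (h : i ∈ N), σ i = ((σN ⟨i, h⟩ : {x // x ∈ N}) : Fin l) := by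
      intro i h
      exact Equiv.Perm.subtypeCongr.left_apply σN (Equiv.refl _) h
    have hσn : ∀ i, i ∉ N → σ i = i := by
      intro i h
      exact Equiv.Perm.subtypeCongr.right_apply σN (Equiv.refl _) h
    have hσ_mem : ∀ i, σ i ∈ N ↔ i ∈ N := by
      intro i
      by_cases h : i ∈ N
      · rw [hσN i h]; simpa using h
      · rw [hσn i h]
    refine ⟨Matrix.of fun i j => if i = σ j then (1:R) else 0,
      Matrix.of fun i j => A (σ i) j, ⟨σ, fun i j => rfl⟩,
      ⟨fun i j => h01 _ _, fun i j j' h h' => hrow (σ i) _ _ h h',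
       fun i i' j h h' => σ.injective (hcol _ _ _ h h')⟩, ?_, ?_, ?_, ?_⟩
    · -- pseudo-echelon
      intro i i' j j' hlt hPij hPij'
      have h1 : A (σ i) j = 1 := (h01 _ _).resolve_left hPij
      have h1' : A (σ i') j' = 1 := (h01 _ _).resolve_left hPij'
      have hiN : i ∈ N := (hσ_mem i).1 ((hmemN _).2 ⟨j, h1⟩)
      have hi'N : i' ∈ N := (hσ_mem i').1 ((hmemN _).2 ⟨j', h1'⟩)
      have hj : j = ((e2 (e1.symm ⟨i, hiN⟩) : {y // y ∈ T}) : Fin k) := by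
        rw [← hcσN ⟨i, hiN⟩, ← hσN i hiN]
        exact (hcu _ _ h1).symm
      have hj' : j' = ((e2 (e1.symm ⟨i', hi'N⟩) : {y // y ∈ T}) : Fin k) := by
        rw [← hcσN ⟨i', hi'N⟩, ← hσN i' hi'N]
        exact (hcu _ _ h1').symm
      rw [hj, hj']
      have : (⟨i, hiN⟩ : {x // x ∈ N}) < ⟨i', hi'N⟩ := hlt
      exact e2.lt_iff_lt.2 (e1.symm.lt_iff_lt.2 this)
    · -- A = S * P
      ext i j
      rw [Matrix.mul_apply]
      have hterm : ∀ m, (Matrix.of fun i j => if i = σ j then (1:R) else 0) i m *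
          (Matrix.of fun i j => A (σ i) j) m j = if σ.symm i = m then A i j else 0 := by
        intro m
        by_cases h : i = σ m
        · subst h
          simp
        · simp only [Matrix.of_apply, if_neg h, zero_mul,
            if_neg (fun hm : σ.symm i = m => h (by rw [← hm, Equiv.apply_symm_apply]))]
      rw [Finset.sum_congr rfl fun m _ => hterm m]
      simp
    · -- rows
      have hrowiff : ∀ i, (∀ j, A i j = 0) ↔ i ∉ N := by
        intro i
        rw [hmemN]
        constructor
        · rintro h ⟨j, hj⟩
          exact one_ne_zero (hj ▸ h j)
        · intro h j
          rcases h01 i j with h0 | h1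
          · exact h0
          · exact absurd ⟨j, h1⟩ h
      intro i
      rw [hrowiff i, ← hσ_mem i, ← hrowiff (σ i)]
      exact Iff.rfl
    · -- columns
      intro j
      constructor
      · intro h i
        have := h (σ.symm i)
        simpa using this
      · intro h i
        exact h (σ i)
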